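/- Let C and D be categories with C having pullbacks, and let L ⊣ R be an adjunction with L : C → D and R : D → C. Then for each object c ∈ C there is an induced adjunction between the slice categories C/c and D/L(c), whose left adjoint sends f : x → c to L(f) : L(x) → L(c), and whose right adjoint sends g : y → L(c) to the pullback of R(g) along the unit η_c : c → R(L(c)). -/

import Mathlib

open CategoryTheory CategoryTheory.Limits

/-- Given an adjunction `L ⊣ R` with `L : C → D`, `R : D → C` and `C` having pullbacks,
for each `c : C` there is an induced adjunction between the slice categories `C/c` and
`D/L(c)`: the left adjoint is postcomposition with `L` (sending `f : x → c` to
`L(f) : L(x) → L(c)`), and the right adjoint sends `g : y → L(c)` to the pullback of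
`R(g)` along the unit `η_c : c → R(L(c))`. -/
theorem stmt_6 {C D : Type*} [Category C] [Category D] [HasPullbacks C]
    {L : C ⥤ D} {R : D ⥤ C} (adj : L ⊣ R) (c : C) :
    Nonempty ((Over.post L : Over c ⥤ Over (L.obj c)) ⊣
      (Over.post R ⋙ Over.pullback (adj.unit.app c))) := by
  refine ⟨Adjunction.mkOfHomEquiv
    { homEquiv := fun f g =>
        { toFun := fun u => Over.homMk
            (pullback.lift (adj.homEquiv _ _ u.left) f.hom
              (by
                have hu : u.left ≫ g.hom = L.map f.hom := by
                  exact Over.w u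
                erw [Adjunction.homEquiv_unit, Category.assoc, ← R.map_comp, hu]
                exact (adj.unit.naturality f.hom).symm))
            (pullback.lift_snd _ _ _)
          invFun := fun w => Over.homMk
            ((adj.homEquiv _ _).symm (w.left ≫ pullback.fst _ _))
            (by
              simp only [Over.post_obj, Over.mk_hom, Adjunction.homEquiv_counit]
              have hc := pullback.condition (f := R.map g.hom) (g := adj.unit.app c)
              have hw : w.left ≫ pullback.snd (R.map g.hom) (adj.unit.app c)
                  = f.hom := Over.w w
              have h1 : (w.left ≫ pullback.fst (R.map g.hom) (adj.unit.app c)) ≫ R.map g.hom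
                  = f.hom ≫ adj.unit.app c := by
                erw [Category.assoc, hc, ← Category.assoc, hw]
              have hn := adj.counit.naturality g.hom
              simp only [Functor.id_obj, Functor.id_map, Functor.comp_obj,
                Functor.comp_map] at hn
              erw [Category.assoc, ← hn, ← Category.assoc,
                ← L.map_comp, h1, L.map_comp, Category.assoc]
              simp
              exact Category.comp_id _)
          left_inv := fun u => by
            ext
            exact (congrArg (adj.homEquiv f.left g.left).symm
              (pullback.lift_fst (adj.homEquiv _ _ u.left) f.hom _)).trans
              ((adj.homEquiv f.left g.left).symm_apply_apply u.left)
          right_inv := fun w => by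
            ext
            apply pullback.hom_ext
            · exact (pullback.lift_fst _ _ _).trans ((adj.homEquiv f.left g.left).apply_symm_apply _)
            · exact (pullback.lift_snd _ _ _).trans (Over.w w).symm }
      homEquiv_naturality_left_symm := fun u v => by
        ext
        exact (congrArg (adj.homEquiv _ _).symm (Category.assoc u.left v.left (pullback.fst _ _))).trans
          (adj.homEquiv_naturality_left_symm u.left (v.left ≫ pullback.fst _ _))
      homEquiv_naturality_right := fun u v => by
        ext
        apply pullback.hom_ext
        · refine (pullback.lift_fst _ _ _).trans ((adj.homEquiv_naturality_right u.left v.left).trans ?_)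
          refine Eq.trans ?_ (Category.assoc _ _ _).symm
          refine Eq.trans ?_ (congrArg _ (pullback.lift_fst _ _ _).symm)
          exact (pullback.lift_fst_assoc _ _ _ _).symm
        · refine (pullback.lift_snd _ _ _).trans ?_
          refine Eq.trans ?_ (Category.assoc _ _ _).symm
          refine Eq.trans ?_ (congrArg _ (pullback.lift_snd _ _ _).symm)
          exact (pullback.lift_snd _ _ _).symm }⟩
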